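/- Let R be a ring and let θ, η be additive invariants on finite-length R-modules, with η(M) > 0 for every nonzero finite-length module M. For a nonzero module M set μ(M) = θ(M)/η(M), and call M semistable if μ(X) ≤ μ(M) for every nonzero submodule X ⊆ M. Let T be a finite-length module with a filtration 0 = T₀ ⊂ T₁ ⊂ ⋯ ⊂ T_ℓ = T whose subquotients T_k/T_{k−1} are nonzero and semistable and satisfy μ(T₁/T₀) > μ(T₂/T₁) > ⋯ > μ(T_ℓ/T_{ℓ−1}). Then for every a ∈ ℝ, letting k be the largest index with μ(T_k/T_{k−1}) > a (and k = 0 if no such index exists), the submodule T_k satisfies: every nonzero quotient Q of T_k has θ(Q) − a·η(Q) > 0, and every nonzero submodule X of T/T_k has θ(X) − a·η(X) ≤ 0. (That is, T_k is the torsion submodule of T with respect to the torsion pair (𝓘_{θ−aη}, 𝓟̄_{θ−aη}).) -/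

import Mathlib

universe u

/-- An *additive invariant* on finite-length modules over a ring `R`: an assignment of a real
number to every module (whose value is only constrained on finite-length modules) that is
invariant under isomorphism and additive in short exact sequences. -/
structure AdditiveInvariant (R : Type u) [Ring R] where
  /-- The value of the invariant on a module. -/
  val : (M : Type u) → [AddCommGroup M] → [Module R M] → ℝ
  /-- Isomorphism invariance on finite-length modules. -/
  iso_inv : ∀ (M N : Type u) [AddCommGroup M] [Module R M] [AddCommGroup N] [Module R N],
    IsFiniteLength R M → (M ≃ₗ[R] N) → val M = val N
  /-- Additivity with respect to submodules and quotients, on finite-length modules. -/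
  additive : ∀ (M : Type u) [AddCommGroup M] [Module R M], IsFiniteLength R M →
    ∀ N : Submodule R M, val M = val N + val (M ⧸ N)

variable {R : Type u} [Ring R]

/-- `M` lies in `𝓘_θ`: every nonzero quotient `Q` of `M` satisfies `θ(Q) > 0`. -/
def MemI (θ : AdditiveInvariant R) (M : Type u) [AddCommGroup M] [Module R M] : Prop :=
  ∀ N : Submodule R M, N ≠ ⊤ → 0 < θ.val (M ⧸ N)

/-- `M` lies in `𝓘̄_θ`: every nonzero quotient `Q` of `M` satisfies `θ(Q) ≥ 0`. -/
def MemIbar (θ : AdditiveInvariant R) (M : Type u) [AddCommGroup M] [Module R M] : Prop :=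
  ∀ N : Submodule R M, N ≠ ⊤ → 0 ≤ θ.val (M ⧸ N)

/-- `M` lies in `𝓟_θ`: every nonzero submodule `X` of `M` satisfies `θ(X) < 0`. -/
def MemP (θ : AdditiveInvariant R) (M : Type u) [AddCommGroup M] [Module R M] : Prop :=
  ∀ X : Submodule R M, X ≠ ⊥ → θ.val X < 0

/-- `M` lies in `𝓟̄_θ`: every nonzero submodule `X` of `M` satisfies `θ(X) ≤ 0`. -/
def MemPbar (θ : AdditiveInvariant R) (M : Type u) [AddCommGroup M] [Module R M] : Prop :=
  ∀ X : Submodule R M, X ≠ ⊥ → θ.val X ≤ 0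

/-- `M` is `θ`-semistable: `θ(M) = 0` and every submodule `X` of `M` satisfies `θ(X) ≤ 0`. -/
def Semistable (θ : AdditiveInvariant R) (M : Type u) [AddCommGroup M] [Module R M] : Prop :=
  θ.val M = 0 ∧ ∀ X : Submodule R M, θ.val X ≤ 0

namespace HNaux

variable {R : Type u} [Ring R]

lemma fl_sub {M : Type u} [AddCommGroup M] [Module R M] (h : IsFiniteLength R M)
    (p : Submodule R M) : IsFiniteLength R p := by
  rw [isFiniteLength_iff_isNoetherian_isArtinian] at h ⊢
  obtain ⟨h1, h2⟩ := h
  exact ⟨inferInstance, inferInstance⟩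

lemma fl_quot {M : Type u} [AddCommGroup M] [Module R M] (h : IsFiniteLength R M)
    (p : Submodule R M) : IsFiniteLength R (M ⧸ p) := by
  rw [isFiniteLength_iff_isNoetherian_isArtinian] at h ⊢
  obtain ⟨h1, h2⟩ := h
  exact ⟨inferInstance, inferInstance⟩

lemma val_zero (θ : AdditiveInvariant R) (M : Type u) [AddCommGroup M] [Module R M]
    [Subsingleton M] : θ.val M = 0 := by
  have hfl : IsFiniteLength R M := .of_subsingleton
  have h := θ.additive M hfl ⊥
  have h1 : θ.val (⊥ : Submodule R M) = θ.val M :=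
    θ.iso_inv _ _ .of_subsingleton (LinearEquiv.ofSubsingleton _ _)
  have h2 : θ.val (M ⧸ (⊥ : Submodule R M)) = θ.val M :=
    θ.iso_inv _ _ (fl_quot hfl ⊥) ((⊥ : Submodule R M).quotEquivOfEqBot rfl)
  rw [h1, h2] at h
  linarith

lemma val_quot (θ : AdditiveInvariant R) {M : Type u} [AddCommGroup M] [Module R M]
    (h : IsFiniteLength R M) (p : Submodule R M) :
    θ.val (M ⧸ p) = θ.val M - θ.val p := by
  have := θ.additive M h p
  linarith

/-- The additive invariant `θ - a • η`. -/
def phi (θ η : AdditiveInvariant R) (a : ℝ) : AdditiveInvariant R where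
  val := fun M _ _ => θ.val M - a * η.val M
  iso_inv := by
    intro M N _ _ _ _ h e
    simp only [θ.iso_inv M N h e, η.iso_inv M N h e]
  additive := by
    intro M _ _ h p
    have h1 := θ.additive M h p
    have h2 := η.additive M h p
    linear_combination h1 - a * h2

/-- Unguarded version of `MemPbar`. -/
def PbarAll (φ : AdditiveInvariant R) (M : Type u) [AddCommGroup M] [Module R M] : Prop :=
  ∀ X : Submodule R M, φ.val X ≤ 0

lemma memI_congr (φ : AdditiveInvariant R) {M N : Type u} [AddCommGroup M] [Module R M]
    [AddCommGroup N] [Module R N] (hM : IsFiniteLength R M) (e : M ≃ₗ[R] N)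
    (h : MemI φ N) : MemI φ M := by
  intro p hp
  have hmap : Submodule.map (e : M →ₗ[R] N) p ≠ ⊤ := by
    intro hc
    apply hp
    have h2 := Submodule.comap_map_eq_of_injective (f := (e : M →ₗ[R] N))
      (by exact e.injective) p
    rw [hc, Submodule.comap_top] at h2
    exact h2.symm
  have h3 := h _ hmap
  rwa [φ.iso_inv _ _ (fl_quot hM p) (Submodule.Quotient.equiv p _ e rfl)]

lemma pbarAll_congr (φ : AdditiveInvariant R) {M N : Type u} [AddCommGroup M] [Module R M]
    [AddCommGroup N] [Module R N] (hM : IsFiniteLength R M) (e : M ≃ₗ[R] N)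
    (h : PbarAll φ N) : PbarAll φ M := by
  intro p
  have h1 := h (Submodule.map (e : M →ₗ[R] N) p)
  rwa [φ.iso_inv _ _ (fl_sub hM p) (e.submoduleMap p)]

lemma memI_nonneg (φ : AdditiveInvariant R) {M : Type u} [AddCommGroup M] [Module R M]
    (hM : IsFiniteLength R M) (h : MemI φ M) (p : Submodule R M) :
    0 ≤ φ.val (M ⧸ p) := by
  by_cases hp : p = ⊤
  · haveI : Subsingleton (M ⧸ p) := Submodule.Quotient.subsingleton_iff.mpr hp
    rw [val_zero]
  · exact (h p hp).le

/-- A semistable module of slope `> a` lies in `𝓘_{θ - aη}`. -/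
lemma semistable_memI (θ η : AdditiveInvariant R) (a : ℝ) {S : Type u}
    [AddCommGroup S] [Module R S] (hfl : IsFiniteLength R S) [hnt : Nontrivial S]
    (hη : ∀ (M : Type u) [AddCommGroup M] [Module R M],
      IsFiniteLength R M → Nontrivial M → 0 < η.val M)
    (hss : ∀ X : Submodule R S, X ≠ ⊥ → θ.val X / η.val X ≤ θ.val S / η.val S)
    (ha : a < θ.val S / η.val S) : MemI (phi θ η a) S := by
  intro N hN
  set μ : ℝ := θ.val S / η.val S with hμ
  have hηS : 0 < η.val S := hη S hfl hnt
  have hθS : θ.val S = μ * η.val S := by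
    rw [hμ]; field_simp
  have hNbd : θ.val N ≤ μ * η.val N := by
    by_cases h : N = ⊥
    · haveI : Subsingleton N := by rw [h]; infer_instance
      rw [val_zero, val_zero]
      simp
    · haveI : Nontrivial N := (Submodule.nontrivial_iff_ne_bot).mpr h
      have hηN := hη N (fl_sub hfl N) inferInstance
      have h1 := hss N h
      rw [hμ] at h1 ⊢
      rw [div_le_div_iff₀ hηN hηS] at h1
      nlinarith
  have e1 : θ.val (S ⧸ N) = θ.val S - θ.val N := val_quot θ hfl N
  have e2 : η.val (S ⧸ N) = η.val S - η.val N := val_quot η hfl N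
  haveI hq : Nontrivial (S ⧸ N) :=
    Submodule.Quotient.nontrivial_iff.mpr (lt_top_iff_ne_top.mpr hN).ne
  have hηQ : 0 < η.val (S ⧸ N) := hη _ (fl_quot hfl N) hq
  have h5 : μ * (η.val S - η.val N) = μ * η.val S - μ * η.val N := by ring
  have h6 : μ * η.val (S ⧸ N) ≤ θ.val (S ⧸ N) := by
    rw [e1, e2]
    linarith
  have h7 : a * η.val (S ⧸ N) < μ * η.val (S ⧸ N) := mul_lt_mul_of_pos_right ha hηQ
  show 0 < θ.val (S ⧸ N) - a * η.val (S ⧸ N)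
  linarith

/-- A semistable module of slope `≤ a` lies in `𝓟̄_{θ - aη}`. -/
lemma semistable_pbar (θ η : AdditiveInvariant R) (a : ℝ) {S : Type u}
    [AddCommGroup S] [Module R S] (hfl : IsFiniteLength R S)
    (hη : ∀ (M : Type u) [AddCommGroup M] [Module R M],
      IsFiniteLength R M → Nontrivial M → 0 < η.val M)
    (hss : ∀ X : Submodule R S, X ≠ ⊥ → θ.val X / η.val X ≤ θ.val S / η.val S)
    (ha : θ.val S / η.val S ≤ a) : PbarAll (phi θ η a) S := by
  intro X
  show θ.val X - a * η.val X ≤ 0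
  by_cases h : X = ⊥
  · haveI : Subsingleton X := by rw [h]; infer_instance
    rw [val_zero, val_zero]
    simp
  · haveI : Nontrivial X := (Submodule.nontrivial_iff_ne_bot).mpr h
    have hηX := hη X (fl_sub hfl X) inferInstance
    have h1 : θ.val X / η.val X ≤ a := le_trans (hss X h) ha
    rw [div_le_iff₀ hηX] at h1
    linarith

/-- `𝓘_φ` is closed under extensions. -/
lemma memI_ext (φ : AdditiveInvariant R) {M : Type u} [AddCommGroup M] [Module R M]
    (hfl : IsFiniteLength R M) (G : Submodule R M)
    (hG : MemI φ G) (hQ : MemI φ (M ⧸ G)) : MemI φ M := by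
  intro N hN
  set H : Submodule R M := N ⊔ G with hH
  have hflQ : IsFiniteLength R (M ⧸ N) := fl_quot hfl N
  have hadd := φ.additive (M ⧸ N) hflQ (Submodule.map N.mkQ H)
  have e2 := Submodule.quotientQuotientEquivQuotient N H le_sup_left
  have e3 := Submodule.quotientQuotientEquivQuotient G H le_sup_right
  set f : G →ₗ[R] M ⧸ N := N.mkQ ∘ₗ G.subtype with hf
  have hkerf : LinearMap.ker f = Submodule.comap G.subtype N := by
    rw [hf, LinearMap.ker_comp, Submodule.ker_mkQ]
  have hmapH : Submodule.map N.mkQ H = Submodule.map N.mkQ G := by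
    rw [hH, Submodule.map_sup, N.mkQ_map_self, bot_sup_eq]
  have hrange : LinearMap.range f = Submodule.map N.mkQ G := by
    rw [hf, LinearMap.range_comp, Submodule.range_subtype]
  have v1 : φ.val (Submodule.map N.mkQ H) = φ.val (G ⧸ LinearMap.ker f) := by
    rw [hmapH, ← hrange]
    exact (φ.iso_inv _ _ (fl_quot (fl_sub hfl G) _) f.quotKerEquivRange).symm
  have v2 : φ.val ((M ⧸ N) ⧸ Submodule.map N.mkQ H) =
      φ.val ((M ⧸ G) ⧸ Submodule.map G.mkQ H) :=
    φ.iso_inv _ _ (fl_quot hflQ _) (e2.trans e3.symm)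
  rw [v1, v2] at hadd
  by_cases hHtop : H = ⊤
  · -- second piece vanishes, first piece is positive
    have htop2 : Submodule.map G.mkQ H = ⊤ := by
      rw [hHtop, Submodule.map_top, Submodule.range_mkQ]
    haveI : Subsingleton ((M ⧸ G) ⧸ Submodule.map G.mkQ H) :=
      Submodule.Quotient.subsingleton_iff.mpr htop2
    have hB : φ.val ((M ⧸ G) ⧸ Submodule.map G.mkQ H) = 0 := val_zero φ _
    have hker : LinearMap.ker f ≠ ⊤ := by
      intro hc
      rw [hkerf, Submodule.comap_subtype_eq_top] at hc
      apply hN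
      rw [← hHtop, hH, sup_eq_left.mpr hc]
    have hA : 0 < φ.val (G ⧸ LinearMap.ker f) := hG _ hker
    linarith
  · -- second piece positive, first piece nonnegative
    have hmapne : Submodule.map G.mkQ H ≠ ⊤ := by
      intro hc
      rw [Submodule.map_mkQ_eq_top, sup_eq_right.mpr le_sup_right] at hc
      exact hHtop hc
    have hB : 0 < φ.val ((M ⧸ G) ⧸ Submodule.map G.mkQ H) := hQ _ hmapne
    have hA : 0 ≤ φ.val (G ⧸ LinearMap.ker f) :=
      memI_nonneg φ (fl_sub hfl G) hG _
    linarith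

/-- `𝓟̄_φ` is closed under extensions. -/
lemma pbar_ext (φ : AdditiveInvariant R) {M : Type u} [AddCommGroup M] [Module R M]
    (hfl : IsFiniteLength R M) (G : Submodule R M)
    (hG : PbarAll φ G) (hQ : PbarAll φ (M ⧸ G)) : PbarAll φ M := by
  intro X
  set Y : Submodule R X := Submodule.comap X.subtype G with hY
  have hflX : IsFiniteLength R X := fl_sub hfl X
  have hadd := φ.additive X hflX Y
  -- first piece: Y is isomorphic to a submodule of G
  have e1 := Submodule.equivSubtypeMap X Y
  have hmap : Submodule.map X.subtype Y = X ⊓ G := Submodule.map_comap_subtype _ _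
  have e2 := Submodule.comapSubtypeEquivOfLe (inf_le_right : X ⊓ G ≤ G)
  have h1 : φ.val Y ≤ 0 := by
    have v1 : φ.val Y = φ.val (X ⊓ G : Submodule R M) := by
      have h2 := φ.iso_inv _ _ (fl_sub hflX Y) e1
      rwa [hmap] at h2
    have v2 : φ.val (Submodule.comap G.subtype (X ⊓ G)) = φ.val (X ⊓ G : Submodule R M) :=
      φ.iso_inv _ _ (fl_sub (fl_sub hfl G) _) e2
    rw [v1, ← v2]
    exact hG _
  -- second piece: X ⧸ Y is isomorphic to a submodule of M ⧸ G
  set g : X →ₗ[R] M ⧸ G := G.mkQ ∘ₗ X.subtype with hg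
  have hkerg : LinearMap.ker g = Y := by
    rw [hg, LinearMap.ker_comp, Submodule.ker_mkQ, hY]
  have e3 : (X ⧸ Y) ≃ₗ[R] LinearMap.range g := by
    rw [← hkerg]
    exact g.quotKerEquivRange
  have h2 : φ.val (X ⧸ Y) ≤ 0 := by
    rw [φ.iso_inv _ _ (fl_quot hflX Y) e3]
    exact hQ _
  linarith

end HNaux

open HNaux

/-- **Proposition (Harder–Narasimhan filtration vs. torsion pairs).**
Let `θ, η` be additive invariants with `η > 0` on nonzero finite-length modules, and set
`μ(M) = θ(M)/η(M)`. Let `0 = T₀ ⊂ T₁ ⊂ ⋯ ⊂ T_ℓ = T` be a filtration whose subquotients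
are nonzero and semistable, with strictly decreasing slopes. Then for every `a ∈ ℝ`,
letting `k` be the largest index with `μ(T_k/T_{k−1}) > a` (and `k = 0` if no such index
exists), the submodule `T_k` is the torsion submodule of `T` with respect to the torsion
pair `(𝓘_{θ−aη}, 𝓟̄_{θ−aη})`: every nonzero quotient `Q` of `T_k` satisfies
`θ(Q) − a·η(Q) > 0`, and every nonzero submodule `X` of `T/T_k` satisfies
`θ(X) − a·η(X) ≤ 0`. -/
theorem hn_filtration_torsion (R : Type u) [Ring R] (θ η : AdditiveInvariant R)
    (hη : ∀ (M : Type u) [AddCommGroup M] [Module R M],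
      IsFiniteLength R M → Nontrivial M → 0 < η.val M)
    (T : Type u) [AddCommGroup T] [Module R T] (hT : IsFiniteLength R T)
    (ℓ : ℕ) (F : ℕ → Submodule R T)
    (hF0 : F 0 = ⊥) (hFℓ : F ℓ = ⊤)
    (hlt : ∀ i < ℓ, F i < F (i + 1))
    -- each subquotient `T_{i+1}/T_i` is semistable: `μ(X) ≤ μ(T_{i+1}/T_i)` for every
    -- nonzero submodule `X`
    (hss : ∀ i < ℓ, ∀ X : Submodule R
        ((F (i + 1)) ⧸ Submodule.comap (F (i + 1)).subtype (F i)), X ≠ ⊥ →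
      θ.val X / η.val X ≤
        θ.val ((F (i + 1)) ⧸ Submodule.comap (F (i + 1)).subtype (F i)) /
          η.val ((F (i + 1)) ⧸ Submodule.comap (F (i + 1)).subtype (F i)))
    -- the slopes of the subquotients are strictly decreasing
    (hdec : ∀ i, i + 1 < ℓ →
      θ.val ((F (i + 2)) ⧸ Submodule.comap (F (i + 2)).subtype (F (i + 1))) /
          η.val ((F (i + 2)) ⧸ Submodule.comap (F (i + 2)).subtype (F (i + 1))) <
        θ.val ((F (i + 1)) ⧸ Submodule.comap (F (i + 1)).subtype (F i)) /
          η.val ((F (i + 1)) ⧸ Submodule.comap (F (i + 1)).subtype (F i)))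
    (a : ℝ) (k : ℕ) (hkℓ : k ≤ ℓ)
    -- `k` is the largest index with `μ(T_k/T_{k−1}) > a` (and `k = 0` if there is none)
    (hk1 : ∀ j, j + 1 = k →
      a < θ.val ((F k) ⧸ Submodule.comap (F k).subtype (F j)) /
            η.val ((F k) ⧸ Submodule.comap (F k).subtype (F j)))
    (hk2 : k < ℓ →
      θ.val ((F (k + 1)) ⧸ Submodule.comap (F (k + 1)).subtype (F k)) /
          η.val ((F (k + 1)) ⧸ Submodule.comap (F (k + 1)).subtype (F k)) ≤ a) :
    (∀ N : Submodule R (F k), N ≠ ⊤ →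
      0 < θ.val ((F k) ⧸ N) - a * η.val ((F k) ⧸ N)) ∧
    (∀ X : Submodule R (T ⧸ F k), X ≠ ⊥ →
      θ.val X - a * η.val X ≤ 0) := by
  classical
  set φ : AdditiveInvariant R := phi θ η a with hφ
  set s : ℕ → ℝ := fun i =>
    θ.val ((F (i + 1)) ⧸ Submodule.comap (F (i + 1)).subtype (F i)) /
      η.val ((F (i + 1)) ⧸ Submodule.comap (F (i + 1)).subtype (F i)) with hs
  have anti : ∀ i d, i + d < ℓ → s (i + d) ≤ s i := by
    intro i d
    induction d with
    | zero => intro _; exact le_refl _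
    | succ n ih =>
      intro h
      have h1 : i + n < ℓ := by omega
      have h2 := hdec (i + n) (by omega)
      have h3 : s (i + (n + 1)) < s (i + n) := by
        show s (i + n + 1) < s (i + n)
        exact h2
      exact le_trans h3.le (ih h1)
  have hs_gt : ∀ j, j + 1 ≤ k → a < s j := by
    intro j hj
    have hk0 : k - 1 + 1 = k := by omega
    have h1 := hk1 (k - 1) hk0
    have h2 : a < s (k - 1) := by
      show a < θ.val ((F (k - 1 + 1)) ⧸ Submodule.comap (F (k - 1 + 1)).subtype (F (k - 1))) /
        η.val ((F (k - 1 + 1)) ⧸ Submodule.comap (F (k - 1 + 1)).subtype (F (k - 1)))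
      rw [hk0]
      exact h1
    have h3 : s (k - 1) ≤ s j := by
      have h4 := anti j (k - 1 - j) (by omega)
      have h5 : j + (k - 1 - j) = k - 1 := by omega
      rwa [h5] at h4
    linarith
  have hs_le : ∀ j, k ≤ j → j < ℓ → s j ≤ a := by
    intro j h1 h2
    have h3 : s j ≤ s k := by
      have h4 := anti k (j - k) (by omega)
      have h5 : k + (j - k) = j := by omega
      rwa [h5] at h4
    have h6 : s k ≤ a := hk2 (by omega)
    linarith
  have hflQ : ∀ i, IsFiniteLength R
      ((F (i + 1)) ⧸ Submodule.comap (F (i + 1)).subtype (F i)) :=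
    fun i => fl_quot (fl_sub hT (F (i + 1))) _
  have hnt : ∀ i, i < ℓ → Nontrivial
      ((F (i + 1)) ⧸ Submodule.comap (F (i + 1)).subtype (F i)) := by
    intro i hi
    refine Submodule.Quotient.nontrivial_iff.mpr (lt_top_iff_ne_top.mpr ?_).ne
    intro hc
    exact (hlt i hi).not_ge (Submodule.comap_subtype_eq_top.mp hc)
  have part1 : ∀ j, j ≤ k → MemI φ (F j) := by
    intro j
    induction j with
    | zero =>
      intro _
      haveI hss0 : Subsingleton (F 0 : Type u) := by rw [hF0]; infer_instance
      haveI := (Submodule.subsingleton_iff R).mpr hss0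
      intro N hN
      exact absurd (Subsingleton.elim N ⊤) hN
    | succ j ih =>
      intro hj1
      have hjl : j < ℓ := by omega
      have hle : F j ≤ F (j + 1) := (hlt j hjl).le
      apply memI_ext φ (fl_sub hT (F (j + 1))) (Submodule.comap (F (j + 1)).subtype (F j))
      · exact memI_congr φ (fl_sub (fl_sub hT (F (j + 1))) _)
          (Submodule.comapSubtypeEquivOfLe hle) (ih (by omega))
      · haveI := hnt j hjl
        exact semistable_memI θ η a (hflQ j) hη (hss j hjl) (hs_gt j hj1)
  have part2 : ∀ d j, j + d = ℓ → k ≤ j → PbarAll φ (T ⧸ F j) := by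
    intro d
    induction d with
    | zero =>
      intro j hj _
      have hj' : F j = ⊤ := by rw [show j = ℓ by omega, hFℓ]
      haveI : Subsingleton (T ⧸ F j) :=
        Submodule.Quotient.subsingleton_iff.mpr hj'
      intro X
      haveI : Subsingleton X := by infer_instance
      rw [val_zero]
    | succ n ih =>
      intro j hj hkj
      have hjl : j < ℓ := by omega
      have hle : F j ≤ F (j + 1) := (hlt j hjl).le
      apply pbar_ext φ (fl_quot hT (F j)) (Submodule.map (F j).mkQ (F (j + 1)))
      · set g : (F (j + 1)) →ₗ[R] T ⧸ F j := (F j).mkQ ∘ₗ (F (j + 1)).subtype with hg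
        have hker : LinearMap.ker g = Submodule.comap (F (j + 1)).subtype (F j) := by
          rw [hg, LinearMap.ker_comp, Submodule.ker_mkQ]
        have hran : LinearMap.range g = Submodule.map (F j).mkQ (F (j + 1)) := by
          rw [hg, LinearMap.range_comp, Submodule.range_subtype]
        have e : ((F (j + 1)) ⧸ Submodule.comap (F (j + 1)).subtype (F j)) ≃ₗ[R]
            (Submodule.map (F j).mkQ (F (j + 1)) : Submodule R (T ⧸ F j)) := by
          rw [← hker, ← hran]
          exact g.quotKerEquivRange
        exact pbarAll_congr φ (fl_sub (fl_quot hT (F j)) _) e.symm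
          (semistable_pbar θ η a (hflQ j) hη (hss j hjl) (hs_le j hkj hjl))
      · exact pbarAll_congr φ (fl_quot (fl_quot hT (F j)) _)
          (Submodule.quotientQuotientEquivQuotient (F j) (F (j + 1)) hle)
          (ih (j + 1) (by omega) (by omega))
  constructor
  · intro N hN
    exact part1 k le_rfl N hN
  · intro X _
    exact part2 (ℓ - k) k (by omega) le_rfl X
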